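/- The column space of the p \times p circulant matrix B_p (with entries c_p(i - j)) equals the span of the \phi(p) Fourier columns (1, \omega_p^{k}, \omega_p^{2k}, \dots, \omega_p^{(p-1)k})^T over all k with 1 \le k \le p and \gcd(k,p) = 1, where \omega_p = e^{-2\pi i / p}. -/

import Mathlib

/-- The Ramanujan sum `c_p(n) = ∑_{1 ≤ k ≤ p, gcd(k,p)=1} e^{2πikn/p}`. -/
noncomputable def ramanujanSum (p : ℕ) (n : ℤ) : ℂ :=
  ∑ k ∈ (Finset.Icc 1 p).filter (fun k => Nat.gcd k p = 1),
    Complex.exp (2 * (Real.pi : ℂ) * Complex.I * (k : ℂ) * (n : ℂ) / (p : ℂ))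

/-- The `p × p` circulant matrix with `(i,j)` entry `c_p(i - j)`. -/
noncomputable def ramanujanMatrix (p : ℕ) : Matrix (Fin p) (Fin p) ℂ :=
  fun i j => ramanujanSum p ((i : ℤ) - (j : ℤ))

/-- Indices `k` with `1 ≤ k ≤ p` and `gcd(k,p) = 1`, encoded via `k = k'.1 + 1`
for `k' : Fin p`; there are `φ(p)` of them. -/
def coprimeIndex (p : ℕ) : Type := {k : Fin p // Nat.gcd (k.1 + 1) p = 1}

instance (p : ℕ) : Fintype (coprimeIndex p) := by unfold coprimeIndex; infer_instance

/-- The `p × φ(p)` matrix whose columns are the Fourier vectors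
`(1, ω_p^k, ω_p^{2k}, …, ω_p^{(p-1)k})ᵀ`, over all `k` with `1 ≤ k ≤ p`,
`gcd(k,p) = 1`, where `ω_p = e^{-2πi/p}`. -/
noncomputable def fourierCoprimeMatrix (p : ℕ) : Matrix (Fin p) (coprimeIndex p) ℂ :=
  fun i k => Complex.exp (-(2 * (Real.pi : ℂ) * Complex.I) / (p : ℂ)) ^ ((i : ℕ) * (k.1.1 + 1))

namespace RamanujanAux

open Complex Finset

/-- `E p n = e^{2πin/p}`. -/
noncomputable def E (p : ℕ) (n : ℤ) : ℂ :=
  Complex.exp (2 * (Real.pi : ℂ) * Complex.I * (n : ℂ) / (p : ℂ))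

theorem E_congr (p : ℕ) (hp : 0 < p) {a b : ℤ} (h : (p : ℤ) ∣ a - b) : E p a = E p b := by
  obtain ⟨t, ht⟩ := h
  have ha : a = b + p * t := by linarith
  have hpC : (p : ℂ) ≠ 0 := Nat.cast_ne_zero.mpr hp.ne'
  rw [E, E, ha]
  have : 2 * (Real.pi : ℂ) * Complex.I * ((b + p * t : ℤ) : ℂ) / (p : ℂ)
      = 2 * (Real.pi : ℂ) * Complex.I * (b : ℂ) / (p : ℂ) + (t : ℂ) * (2 * Real.pi * Complex.I) := by
    push_cast
    field_simp
  rw [this, Complex.exp_add, Complex.exp_int_mul_two_pi_mul_I, mul_one]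

theorem E_add (p : ℕ) (a b : ℤ) : E p (a + b) = E p a * E p b := by
  rw [E, E, E, ← Complex.exp_add]
  congr 1
  push_cast
  ring

/-- Orthogonality of characters. -/
theorem orth (p : ℕ) (hp : 0 < p) (n : ℤ) :
    ∑ j : Fin p, E p (n * j.1) = if (p : ℤ) ∣ n then (p : ℂ) else 0 := by
  have hζ := Complex.isPrimitiveRoot_exp p hp.ne'
  set ζ : ℂ := Complex.exp (2 * Real.pi * Complex.I / p) with hζdef
  have hzpow : ∀ m : ℤ, ζ ^ m = Complex.exp (2 * Real.pi * Complex.I * m / p) := by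
    intro m
    rw [← Complex.exp_int_mul]
    all_goals ring_nf
  have key : ∀ j : ℕ, E p (n * j) = (ζ ^ n) ^ j := by
    intro j
    rw [← zpow_natCast (ζ ^ n), ← zpow_mul, hzpow, E]
  rw [Fin.sum_univ_eq_sum_range (fun j => E p (n * j))]
  simp_rw [key]
  by_cases h : (p : ℤ) ∣ n
  · have : ζ ^ n = 1 := (hζ.zpow_eq_one_iff_dvd n).2 h
    simp [this, h]
  · have h1 : ζ ^ n ≠ 1 := fun hh => h ((hζ.zpow_eq_one_iff_dvd n).1 hh)
    rw [geom_sum_eq h1]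
    have : (ζ ^ n) ^ p = 1 := by
      rw [← zpow_natCast, ← zpow_mul, mul_comm, zpow_mul, zpow_natCast, hζ.pow_eq_one, one_zpow]
    simp [this, h]

theorem sum_coprime_reindex (p : ℕ) (f : ℕ → ℂ) :
    ∑ k ∈ (Finset.Icc 1 p).filter (fun k => Nat.gcd k p = 1), f k
      = ∑ k : coprimeIndex p, f (k.1.1 + 1) := by
  apply Finset.sum_bij (fun (k : ℕ) (hk : k ∈ (Finset.Icc 1 p).filter
      (fun k => Nat.gcd k p = 1)) =>
    (⟨⟨k - 1, by simp only [mem_filter, mem_Icc] at hk; omega⟩, by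
      simp only [mem_filter, mem_Icc] at hk
      have h1 : k - 1 + 1 = k := by omega
      simpa [h1] using hk.2⟩ : coprimeIndex p))
  · intro a ha; exact mem_univ _
  · intro a ha b hb h
    simp only [mem_filter, mem_Icc] at ha hb
    have := congrArg (fun x : coprimeIndex p => x.1.1) h
    simp at this; omega
  · intro b _
    refine ⟨b.1.1 + 1, ?_, ?_⟩
    · simp only [mem_filter, mem_Icc]
      exact ⟨⟨by omega, by have := b.1.2; omega⟩, b.2⟩
    · apply Subtype.ext; apply Fin.ext; simp
  · intro a ha
    simp only [mem_filter, mem_Icc] at ha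
    show f a = f (a - 1 + 1)
    congr 1; omega

theorem ramanujanSum_eq (p : ℕ) (n : ℤ) :
    ramanujanSum p n = ∑ k : coprimeIndex p, E p ((k.1.1 + 1) * n) := by
  rw [ramanujanSum, sum_coprime_reindex p
    (fun k => Complex.exp (2 * (Real.pi : ℂ) * Complex.I * (k : ℂ) * (n : ℂ) / (p : ℂ)))]
  refine Finset.sum_congr rfl fun k _ => ?_
  rw [E]
  congr 1
  push_cast
  ring

/-- The "negation" involution on coprime indices. -/
def tau (p : ℕ) (k : coprimeIndex p) : coprimeIndex p :=
  ⟨⟨p - k.1.1 - 2, by have := k.1.isLt; omega⟩, by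
    have hk := k.2
    have hlt := k.1.isLt
    by_cases h : k.1.1 + 1 = p
    · have hd : (k.1.1 + 1) ∣ p := ⟨1, by omega⟩
      have hg := Nat.gcd_eq_left hd
      have hp1 : p = 1 := by omega
      simp [hp1]
    · have hval : p - k.1.1 - 2 + 1 = p - (k.1.1 + 1) := by omega
      rw [hval]
      have hdvd : Nat.gcd (p - (k.1.1 + 1)) p ∣ Nat.gcd (k.1.1 + 1) p := by
        refine Nat.dvd_gcd ?_ (Nat.gcd_dvd_right _ _)
        have h1 := Nat.gcd_dvd_left (p - (k.1.1 + 1)) p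
        have h2 := Nat.gcd_dvd_right (p - (k.1.1 + 1)) p
        have h3 := Nat.dvd_sub h2 h1
        have heq : p - (p - (k.1.1 + 1)) = k.1.1 + 1 := by omega
        rwa [heq] at h3
      rw [hk] at hdvd
      exact Nat.dvd_one.mp hdvd⟩

theorem tau_spec (p : ℕ) (k : coprimeIndex p) :
    (p : ℤ) ∣ ((k.1.1 + 1 : ℕ) : ℤ) + (((tau p k).1.1 + 1 : ℕ) : ℤ) := by
  have hk := k.2
  have hlt := k.1.isLt
  by_cases h : k.1.1 + 1 = p
  · have hd : (k.1.1 + 1) ∣ p := ⟨1, by omega⟩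
    have hg := Nat.gcd_eq_left hd
    have hp1 : p = 1 := by omega
    simp [hp1]
  · have heq : ((k.1.1 + 1 : ℕ) : ℤ) + (((tau p k).1.1 + 1 : ℕ) : ℤ) = (p : ℤ) := by
      simp only [tau]
      show ((k.1.1 + 1 : ℕ) : ℤ) + (((p - k.1.1 - 2) + 1 : ℕ) : ℤ) = (p : ℤ)
      push_cast [Nat.sub_sub]
      omega
    exact heq ▸ dvd_refl _

theorem tau_unique (p : ℕ) (k m : coprimeIndex p)
    (h : (p : ℤ) ∣ ((k.1.1 + 1 : ℕ) : ℤ) + ((m.1.1 + 1 : ℕ) : ℤ)) : m = tau p k := by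
  have hk := k.2
  have hm := m.2
  have hltk := k.1.isLt
  have hltm := m.1.isLt
  have h' : p ∣ (k.1.1 + 1) + (m.1.1 + 1) := by
    have := h
    rw [← Nat.cast_add] at this
    exact_mod_cast this
  obtain ⟨c, hc⟩ := h'
  have hp : 0 < p := by omega
  have hub : p * c ≤ p * 2 := by omega
  have hcle : c ≤ 2 := Nat.le_of_mul_le_mul_left hub hp
  have hcpos : 0 < c := by
    rcases Nat.eq_zero_or_pos c with rfl | h0
    · omega
    · exact h0
  apply Subtype.ext; apply Fin.ext
  simp only [tau]
  show m.1.1 = p - k.1.1 - 2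
  rcases (by omega : c = 1 ∨ c = 2) with rfl | rfl
  · omega
  · have hkp : k.1.1 + 1 = p := by omega
    have hd : (k.1.1 + 1) ∣ p := ⟨1, by omega⟩
    have hg := Nat.gcd_eq_left hd
    have hp1 : p = 1 := by omega
    omega

end RamanujanAux

open RamanujanAux Complex Finset in
/-- The column space of `B_p` equals the span of the `φ(p)` Fourier columns. -/
theorem ramanujanMatrix_columnSpace (p : ℕ) (hp : 0 < p) :
    Submodule.span ℂ (Set.range (ramanujanMatrix p).transpose)
      = Submodule.span ℂ (Set.range fun k : coprimeIndex p =>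
          fun i : Fin p => (fourierCoprimeMatrix p) i k) := by
  have hpC : (p : ℂ) ≠ 0 := Nat.cast_ne_zero.mpr hp.ne'
  -- column of B
  have hcol : ∀ j i : Fin p, (ramanujanMatrix p).transpose j i
      = ∑ k : coprimeIndex p, E p ((k.1.1 + 1) * ((i.1 : ℤ) - (j.1 : ℤ))) := by
    intro j i
    rw [Matrix.transpose_apply, ramanujanMatrix, ramanujanSum_eq]
  -- Fourier column entry
  have hfour : ∀ (i : Fin p) (k : coprimeIndex p),
      fourierCoprimeMatrix p i k = E p (-((i.1 : ℤ) * ((k.1.1 : ℤ) + 1))) := by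
    intro i k
    rw [fourierCoprimeMatrix, ← Complex.exp_nat_mul, E]
    congr 1
    push_cast
    ring
  apply le_antisymm
  · rw [Submodule.span_le]
    rintro x ⟨j, rfl⟩
    have hrep : (ramanujanMatrix p).transpose j
        = ∑ k : coprimeIndex p, E p (-((k.1.1 + 1) * (j.1 : ℤ)))
            • (fun i : Fin p => fourierCoprimeMatrix p i (tau p k)) := by
      funext i
      rw [hcol, Finset.sum_apply]
      refine Finset.sum_congr rfl fun k _ => ?_
      rw [Pi.smul_apply, smul_eq_mul, hfour, ← E_add]
      refine E_congr p hp ?_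
      have := (tau_spec p k).mul_left (i.1 : ℤ)
      push_cast at this ⊢
      convert this using 1
      · rfl
      ring
    rw [hrep]
    exact Submodule.sum_mem _ fun k _ => Submodule.smul_mem _ _
      (Submodule.subset_span ⟨tau p k, rfl⟩)
  · rw [Submodule.span_le]
    rintro x ⟨k, rfl⟩
    have hrep : (fun i : Fin p => fourierCoprimeMatrix p i k)
        = (p : ℂ)⁻¹ • ∑ j : Fin p, E p (-((k.1.1 + 1) * (j.1 : ℤ)))
            • (ramanujanMatrix p).transpose j := by
      funext i
      rw [Pi.smul_apply, Finset.sum_apply, smul_eq_mul]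
      have step1 : ∑ j : Fin p, (E p (-((k.1.1 + 1) * (j.1 : ℤ)))
            • (ramanujanMatrix p).transpose j) i
          = ∑ m : coprimeIndex p, E p ((m.1.1 + 1) * (i.1 : ℤ))
              * ∑ j : Fin p, E p ((-(((k.1.1 + 1 : ℕ) : ℤ) + ((m.1.1 + 1 : ℕ) : ℤ))) * (j.1 : ℤ)) := by
        simp only [Pi.smul_apply, smul_eq_mul, hcol, Finset.mul_sum]
        rw [Finset.sum_comm]
        refine Finset.sum_congr rfl fun m _ => ?_
        refine Finset.sum_congr rfl fun j _ => ?_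
        rw [← E_add, ← E_add]
        congr 1
        push_cast
        ring
      rw [step1]
      have step2 : ∀ m : coprimeIndex p,
          ∑ j : Fin p, E p ((-(((k.1.1 + 1 : ℕ) : ℤ) + ((m.1.1 + 1 : ℕ) : ℤ))) * (j.1 : ℤ))
            = if (p : ℤ) ∣ (((k.1.1 + 1 : ℕ) : ℤ) + ((m.1.1 + 1 : ℕ) : ℤ)) then (p : ℂ) else 0 := by
        intro m
        rw [orth p hp]
        by_cases hdd : (p : ℤ) ∣ (((k.1.1 + 1 : ℕ) : ℤ) + ((m.1.1 + 1 : ℕ) : ℤ))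
        · rw [if_pos (dvd_neg.mpr hdd), if_pos hdd]
        · rw [if_neg (fun hh => hdd (dvd_neg.mp hh)), if_neg hdd]
      simp only [step2]
      rw [Finset.sum_eq_single (tau p k)]
      · rw [if_pos (tau_spec p k), hfour]
        rw [show E p (((tau p k).1.1 + 1) * (i.1 : ℤ)) = E p (-((i.1 : ℤ) * ((k.1.1 : ℤ) + 1))) from ?_]
        · field_simp
        · refine E_congr p hp ?_
          have := (tau_spec p k).mul_left (i.1 : ℤ)
          convert this using 1
          · rfl
          push_cast
          ring
      · intro m _ hm
        rw [if_neg, mul_zero]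
        intro hdvd
        exact hm (tau_unique p k m hdvd)
      · intro hm
        exact absurd (Finset.mem_univ _) hm
    show (fun i : Fin p => fourierCoprimeMatrix p i k)
        ∈ Submodule.span ℂ (Set.range (ramanujanMatrix p).transpose)
    rw [hrep]
    exact Submodule.smul_mem _ _ (Submodule.sum_mem _ fun j _ => Submodule.smul_mem _ _
      (Submodule.subset_span ⟨j, rfl⟩))
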